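/- Let (Ω, F, P) be a probability space, Y : Ω → ℝ integrable, and c ∈ (0, 1]. Then the supremum of ∫ Y·D dP over all measurable D : Ω → ℝ satisfying 0 ≤ D ≤ 1/c P-almost everywhere and ∫ D dP = 1 equals inf over q ∈ ℝ of ( q + (1/c)·∫ max(Y − q, 0) dP ). -/

import Mathlib

open MeasureTheory Filter Topology


lemma weak_dual {Ω : Type*} [MeasurableSpace Ω] (P : Measure Ω) [IsProbabilityMeasure P]
    (Y : Ω → ℝ) (hY : Integrable Y P) (c : ℝ) (hc : 0 < c)
    (D : Ω → ℝ) (hD : Measurable D) (hDb : ∀ᵐ ω ∂P, 0 ≤ D ω ∧ D ω ≤ 1 / c)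
    (hD1 : (∫ ω, D ω ∂P) = 1) (q : ℝ) :
    ∫ ω, Y ω * D ω ∂P ≤ q + (1 / c) * ∫ ω, max (Y ω - q) 0 ∂P := by
  have hDint : Integrable D P := by
    refine Integrable.mono' (integrable_const (1/c)) hD.aestronglyMeasurable ?_
    filter_upwards [hDb] with ω ⟨h0, h1⟩
    simpa [abs_of_nonneg h0] using h1
  have hmax : Integrable (fun ω => max (Y ω - q) 0) P := (hY.sub (integrable_const q)).pos_part
  have hYqD : Integrable (fun ω => (Y ω - q) * D ω) P := by
    refine Integrable.mono' ((hY.sub (integrable_const q)).abs.mul_const (1/c))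
      ((hY.sub (integrable_const q)).aestronglyMeasurable.mul hD.aestronglyMeasurable) ?_
    filter_upwards [hDb] with ω ⟨h0, h1⟩
    rw [Real.norm_eq_abs, abs_mul, abs_of_nonneg h0]
    exact mul_le_mul_of_nonneg_left h1 (abs_nonneg _)
  have hsplit : ∫ ω, Y ω * D ω ∂P = ∫ ω, (q * D ω + (Y ω - q) * D ω) ∂P := by
    congr 1; funext ω; ring
  rw [hsplit, integral_add (hDint.const_mul q) hYqD, integral_const_mul, hD1, mul_one]
  gcongr
  calc ∫ ω, (Y ω - q) * D ω ∂P ≤ ∫ ω, (1/c) * max (Y ω - q) 0 ∂P := by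
        refine integral_mono_ae hYqD (hmax.const_mul _) ?_
        filter_upwards [hDb] with ω ⟨h0, h1⟩
        calc (Y ω - q) * D ω ≤ max (Y ω - q) 0 * D ω :=
              mul_le_mul_of_nonneg_right (le_max_left _ _) h0
          _ ≤ max (Y ω - q) 0 * (1/c) := mul_le_mul_of_nonneg_left h1 (le_max_right _ _)
          _ = (1/c) * max (Y ω - q) 0 := mul_comm _ _
    _ = (1/c) * ∫ ω, max (Y ω - q) 0 ∂P := integral_const_mul _ _



lemma toReal_tendsto {Ω : Type*} [MeasurableSpace Ω] (P : Measure Ω) [IsProbabilityMeasure P]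
    {s : ℕ → Set Ω} {t : Set Ω} (h : Tendsto (fun n => P (s n)) atTop (𝓝 (P t))) :
    Tendsto (fun n => (P (s n)).toReal) atTop (𝓝 (P t).toReal) :=
  (ENNReal.tendsto_toReal (measure_ne_top P t)).comp h

lemma exists_quantile {Ω : Type*} [MeasurableSpace Ω] (P : Measure Ω) [IsProbabilityMeasure P]
    (Y' : Ω → ℝ) (hY'm : Measurable Y') (c : ℝ) (hc : 0 < c)
    (hex : ∃ q₀ : ℝ, c < (P {ω | q₀ < Y' ω}).toReal) :
    ∃ q : ℝ, (P {ω | q < Y' ω}).toReal ≤ c ∧ c ≤ (P {ω | q ≤ Y' ω}).toReal := by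
  obtain ⟨q₀, hq₀⟩ := hex
  have hms : ∀ r : ℝ, MeasurableSet {ω | r < Y' ω} := fun r => measurableSet_lt measurable_const hY'm
  have hanti : Antitone fun r : ℝ => (P {ω | r < Y' ω}).toReal := by
    intro r r' hrr'
    exact ENNReal.toReal_mono (measure_ne_top P _)
      (measure_mono fun ω (hω : r' < Y' ω) => lt_of_le_of_lt hrr' hω)
  set A : Set ℝ := {q | (P {ω | q < Y' ω}).toReal ≤ c} with hA
  have hAne : A.Nonempty := by
    have h1 : Tendsto (fun n : ℕ => P {ω | (n:ℝ) < Y' ω}) atTop (𝓝 (P (⋂ n : ℕ, {ω | (n:ℝ) < Y' ω}))) := by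
      refine tendsto_measure_iInter_atTop (fun n => (hms _).nullMeasurableSet) ?_ ⟨0, measure_ne_top P _⟩
      intro n m hnm ω (hω : (m:ℝ) < Y' ω)
      exact lt_of_le_of_lt (by exact_mod_cast hnm) hω
    have h2 : (⋂ n : ℕ, {ω | (n:ℝ) < Y' ω}) = ∅ := by
      ext ω; simp only [Set.mem_iInter, Set.mem_setOf_eq, Set.mem_empty_iff_false, iff_false, not_forall]
      obtain ⟨n, hn⟩ := exists_nat_gt (Y' ω)
      exact ⟨n, not_lt.mpr hn.le⟩
    rw [h2, measure_empty] at h1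
    have h3 : Tendsto (fun n : ℕ => (P {ω | (n:ℝ) < Y' ω}).toReal) atTop (𝓝 0) := by
      simpa [Function.comp_def] using (ENNReal.tendsto_toReal (by simp)).comp h1
    obtain ⟨n, hn⟩ := (h3.eventually_lt_const hc).exists
    exact ⟨n, hn.le⟩
  have hAbdd : BddBelow A := by
    refine ⟨q₀, fun a ha => ?_⟩
    by_contra h
    push_neg at h
    exact absurd (le_trans (hanti h.le) ha) (not_le.mpr hq₀)
  set q := sInf A with hq
  refine ⟨q, ?_, ?_⟩
  · -- right continuity
    have hmono : Monotone fun n : ℕ => {ω | q + 1/(n+1) < Y' ω} := by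
      intro n m hnm ω (hω : q + 1/(n+1) < Y' ω)
      have : (1:ℝ)/(m+1) ≤ 1/(n+1) := by
        apply one_div_le_one_div_of_le (by positivity)
        have := (Nat.cast_le (α := ℝ)).mpr hnm
        linarith
      exact lt_of_le_of_lt (by linarith) hω
    have hU : (⋃ n : ℕ, {ω | q + 1/(n+1) < Y' ω}) = {ω | q < Y' ω} := by
      ext ω
      simp only [Set.mem_iUnion, Set.mem_setOf_eq]
      constructor
      · rintro ⟨n, hn⟩
        have : (0:ℝ) < 1/((n:ℝ)+1) := by positivity
        linarith
      · intro hω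
        obtain ⟨n, hn⟩ := exists_nat_one_div_lt (sub_pos.mpr hω)
        exact ⟨n, by push_cast at hn ⊢; linarith⟩
    have h1 : Tendsto (fun n : ℕ => (P {ω | q + 1/(n+1) < Y' ω}).toReal) atTop
        (𝓝 (P {ω | q < Y' ω}).toReal) := by
      refine toReal_tendsto P ?_
      have := tendsto_measure_iUnion_atTop (μ := P) hmono
      rwa [hU] at this
    refine le_of_tendsto h1 (Eventually.of_forall fun n => ?_)
    obtain ⟨a, haA, halt⟩ := exists_lt_of_csInf_lt hAne (show q < q + 1/(n+1) by
      have : (0:ℝ) < 1/((n:ℝ)+1) := by positivity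
      linarith)
    exact le_trans (hanti halt.le) haA
  · -- left limit
    have hantis : Antitone fun n : ℕ => {ω | q - 1/(n+1) < Y' ω} := by
      intro n m hnm ω (hω : q - 1/(m+1) < Y' ω)
      have : (1:ℝ)/(m+1) ≤ 1/(n+1) := by
        apply one_div_le_one_div_of_le (by positivity)
        have := (Nat.cast_le (α := ℝ)).mpr hnm
        linarith
      exact lt_of_le_of_lt (by linarith) hω
    have hI : (⋂ n : ℕ, {ω | q - 1/(n+1) < Y' ω}) = {ω | q ≤ Y' ω} := by
      ext ω
      simp only [Set.mem_iInter, Set.mem_setOf_eq]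
      constructor
      · intro h
        by_contra hlt
        push_neg at hlt
        obtain ⟨n, hn⟩ := exists_nat_one_div_lt (sub_pos.mpr hlt)
        have := h n
        push_cast at hn this
        linarith
      · intro h n
        have : (0:ℝ) < 1/(n+1) := by positivity
        linarith
    have h1 : Tendsto (fun n : ℕ => (P {ω | q - 1/(n+1) < Y' ω}).toReal) atTop
        (𝓝 (P {ω | q ≤ Y' ω}).toReal) := by
      refine toReal_tendsto P ?_
      have := tendsto_measure_iInter_atTop (μ := P) (fun n => (hms _).nullMeasurableSet) hantis
        ⟨0, measure_ne_top P _⟩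
      rwa [hI] at this
    refine ge_of_tendsto h1 (Eventually.of_forall fun n => ?_)
    have hnotA : q - 1/(n+1) ∉ A := by
      intro h
      have h2 := csInf_le hAbdd h
      rw [← hq] at h2
      have : (0:ℝ) < 1/((n:ℝ)+1) := by positivity
      linarith
    exact le_of_not_ge hnotA



lemma construct_D {Ω : Type*} [MeasurableSpace Ω] (P : Measure Ω) [IsProbabilityMeasure P]
    (Y' : Ω → ℝ) (hY'm : Measurable Y') (hY'int : Integrable Y' P) (c : ℝ) (hc : 0 < c)
    (q : ℝ) (h1 : (P {ω | q < Y' ω}).toReal ≤ c) (h2 : c ≤ (P {ω | q ≤ Y' ω}).toReal) :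
    ∃ D : Ω → ℝ, Measurable D ∧ (∀ ω, 0 ≤ D ω ∧ D ω ≤ 1 / c) ∧
      (∫ ω, D ω ∂P) = 1 ∧
      ∫ ω, Y' ω * D ω ∂P = q + (1 / c) * ∫ ω, max (Y' ω - q) 0 ∂P := by
  set E : Set Ω := {ω | q < Y' ω} with hE
  set F : Set Ω := {ω | Y' ω = q} with hF
  have hEm : MeasurableSet E := measurableSet_lt measurable_const hY'm
  have hFm : MeasurableSet F := hY'm (measurableSet_singleton q)
  set a : ℝ := (P E).toReal with ha
  set b : ℝ := (P F).toReal with hb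
  have ha0 : 0 ≤ a := ENNReal.toReal_nonneg
  have hb0 : 0 ≤ b := ENNReal.toReal_nonneg
  have hdisj : Disjoint F E := by
    rw [Set.disjoint_left]
    intro ω (hω : Y' ω = q) (hω' : q < Y' ω)
    exact absurd hω (ne_of_gt hω')
  have hsplit : {ω | q ≤ Y' ω} = F ∪ E := by
    ext ω
    simp only [Set.mem_setOf_eq, Set.mem_union, hE, hF]
    constructor
    · intro h; rcases eq_or_lt_of_le h with h' | h'
      · exact Or.inl h'.symm
      · exact Or.inr h'
    · rintro (h | h)
      · exact le_of_eq h.symm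
      · exact le_of_lt h
  have hab : (P {ω | q ≤ Y' ω}).toReal = b + a := by
    rw [hsplit, measure_union hdisj hEm, ENNReal.toReal_add (measure_ne_top P F) (measure_ne_top P E)]
  have hcab : c ≤ b + a := hab ▸ h2
  set θ : ℝ := if b = 0 then 0 else (c - a) / (c * b) with hθ
  have hθ0 : 0 ≤ θ := by
    rw [hθ]; split
    · exact le_refl 0
    · next hbne => exact div_nonneg (by linarith) (mul_nonneg hc.le hb0)
  have hθb : θ * b = (c - a) / c := by
    rw [hθ]; split
    · next hbe =>
      have : a = c := by rw [hbe] at hcab; linarith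
      simp [this, hbe]
    · next hbne =>
      have hbpos : 0 < b := lt_of_le_of_ne hb0 (Ne.symm hbne)
      field_simp
  have hθc : θ ≤ 1 / c := by
    rw [hθ]; split
    · positivity
    · next hbne =>
      have hbpos : 0 < b := lt_of_le_of_ne hb0 (Ne.symm hbne)
      rw [div_le_div_iff₀ (by positivity) hc]
      nlinarith
  set D : Ω → ℝ := fun ω => (1/c) * E.indicator 1 ω + θ * F.indicator 1 ω with hD
  have hDmeas : Measurable D := by
    refine Measurable.add ?_ ?_
    · exact (measurable_const.indicator hEm).const_mul _
    · exact (measurable_const.indicator hFm).const_mul _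
  have hDbound : ∀ ω, 0 ≤ D ω ∧ D ω ≤ 1 / c := by
    intro ω
    rw [hD]
    by_cases hωE : ω ∈ E <;> by_cases hωF : ω ∈ F
    · exact absurd hωE (Set.disjoint_left.mp hdisj hωF)
    · simp only [Set.indicator_of_mem hωE, Set.indicator_of_notMem hωF, Pi.one_apply,
        mul_one, mul_zero, add_zero]
      exact ⟨by positivity, le_refl _⟩
    · simp only [Set.indicator_of_notMem hωE, Set.indicator_of_mem hωF, Pi.one_apply,
        mul_one, mul_zero, zero_add]
      exact ⟨hθ0, hθc⟩
    · simp only [Set.indicator_of_notMem hωE, Set.indicator_of_notMem hωF,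
        mul_zero, add_zero]
      exact ⟨le_refl _, by positivity⟩
  have hiint : ∀ s : Set Ω, MeasurableSet s → Integrable (s.indicator (1 : Ω → ℝ)) P :=
    fun s hs => (integrable_const 1).indicator hs
  have hiE : ∫ ω, E.indicator (1 : Ω → ℝ) ω ∂P = a := integral_indicator_one hEm
  have hiF : ∫ ω, F.indicator (1 : Ω → ℝ) ω ∂P = b := integral_indicator_one hFm
  have hDint1 : (∫ ω, D ω ∂P) = 1 := by
    rw [hD]
    rw [integral_add (((hiint E hEm).const_mul _)) (((hiint F hFm).const_mul _)),
      integral_const_mul, integral_const_mul, hiE, hiF, hθb]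
    field_simp
    ring
  refine ⟨D, hDmeas, hDbound, hDint1, ?_⟩
  have hYE : Integrable (E.indicator Y') P := hY'int.indicator hEm
  have hYF : Integrable (F.indicator Y') P := hY'int.indicator hFm
  have hptw : (fun ω => Y' ω * D ω) = fun ω => (1/c) * E.indicator Y' ω + θ * F.indicator Y' ω := by
    funext ω
    rw [hD]
    by_cases hωE : ω ∈ E <;> by_cases hωF : ω ∈ F
    · exact absurd hωE (Set.disjoint_left.mp hdisj hωF)
    · simp only [Set.indicator_of_mem hωE, Set.indicator_of_notMem hωF, Pi.one_apply,
        mul_one, mul_zero, add_zero]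
      ring
    · simp only [Set.indicator_of_notMem hωE, Set.indicator_of_mem hωF, Pi.one_apply,
        mul_one, mul_zero, zero_add]
      ring
    · simp only [Set.indicator_of_notMem hωE, Set.indicator_of_notMem hωF,
        mul_zero, add_zero]
  have hIYD : ∫ ω, Y' ω * D ω ∂P
      = (1/c) * ∫ ω, E.indicator Y' ω ∂P + θ * ∫ ω, F.indicator Y' ω ∂P := by
    rw [hptw, integral_add (hYE.const_mul _) (hYF.const_mul _), integral_const_mul,
      integral_const_mul]
  have hIF : ∫ ω, F.indicator Y' ω ∂P = q * b := by
    rw [integral_indicator hFm]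
    rw [setIntegral_congr_fun hFm (g := fun _ => q) (fun ω hω => hω)]
    rw [setIntegral_const, smul_eq_mul, measureReal_def, ← hb]
    ring
  have hmaxeq : (fun ω => max (Y' ω - q) 0) = fun ω => E.indicator (fun ω => Y' ω - q) ω := by
    funext ω
    by_cases hωE : ω ∈ E
    · rw [Set.indicator_of_mem hωE]
      exact max_eq_left (by have : q < Y' ω := hωE; linarith)
    · rw [Set.indicator_of_notMem hωE]
      exact max_eq_right (by have : ¬ q < Y' ω := hωE; linarith [not_lt.mp this])
  have hImax : ∫ ω, max (Y' ω - q) 0 ∂P = (∫ ω, E.indicator Y' ω ∂P) - q * a := by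
    rw [hmaxeq, integral_indicator hEm,
      integral_sub hY'int.integrableOn (integrableOn_const (measure_ne_top P E)),
      setIntegral_const, smul_eq_mul, measureReal_def, ← integral_indicator hEm, ← ha]
    ring
  rw [hIYD, hIF, hImax]
  have hkey : θ * (q * b) = q * ((c-a)/c) := by
    rw [show θ * (q * b) = q * (θ * b) by ring, hθb]
  rw [hkey]
  field_simp
  ring


theorem generalized_neyman_pearson
    {Ω : Type*} [MeasurableSpace Ω] (P : Measure Ω) [IsProbabilityMeasure P]
    (Y : Ω → ℝ) (hY : Integrable Y P) (c : ℝ) (hc : 0 < c) (hc1 : c ≤ 1) :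
    sSup {x : ℝ | ∃ D : Ω → ℝ, Measurable D ∧
        (∀ᵐ ω ∂P, 0 ≤ D ω ∧ D ω ≤ 1 / c) ∧
        (∫ ω, D ω ∂P) = 1 ∧ x = ∫ ω, Y ω * D ω ∂P} =
      ⨅ q : ℝ, (q + (1 / c) * ∫ ω, max (Y ω - q) 0 ∂P) := by
  set S : Set ℝ := {x : ℝ | ∃ D : Ω → ℝ, Measurable D ∧
      (∀ᵐ ω ∂P, 0 ≤ D ω ∧ D ω ≤ 1 / c) ∧
      (∫ ω, D ω ∂P) = 1 ∧ x = ∫ ω, Y ω * D ω ∂P} with hS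
  set g : ℝ → ℝ := fun q => q + (1 / c) * ∫ ω, max (Y ω - q) 0 ∂P with hg
  have hone : (1:ℝ) ≤ 1 / c := by rw [le_div_iff₀ hc]; linarith
  have hSmem : (∫ ω, Y ω ∂P) ∈ S := by
    refine ⟨fun _ => 1, measurable_const, Filter.Eventually.of_forall fun ω => ⟨zero_le_one, hone⟩,
      by simp, by simp⟩
  have hub : ∀ x ∈ S, ∀ q : ℝ, x ≤ g q := by
    rintro x ⟨D, hDm, hDb, hD1, rfl⟩ q
    exact weak_dual P Y hY c hc D hDm hDb hD1 q
  have hSbdd : BddAbove S := ⟨g 0, fun x hx => hub x hx 0⟩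
  have hlow : ∀ q : ℝ, (∫ ω, Y ω ∂P) ≤ g q := fun q => hub _ hSmem q
  have hgBdd : BddBelow (Set.range g) := ⟨∫ ω, Y ω ∂P, by rintro _ ⟨q, rfl⟩; exact hlow q⟩
  apply le_antisymm
  · exact csSup_le ⟨_, hSmem⟩ fun x hx => le_ciInf (hub x hx)
  · -- strong duality
    set Y' : Ω → ℝ := hY.aestronglyMeasurable.mk Y with hY'def
    have hYY' : Y =ᵐ[P] Y' := hY.aestronglyMeasurable.ae_eq_mk
    have hY'm : Measurable Y' := hY.aestronglyMeasurable.stronglyMeasurable_mk.measurable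
    have hY'int : Integrable Y' P := hY.congr hYY'
    by_cases hex : ∃ q₀ : ℝ, c < (P {ω | q₀ < Y' ω}).toReal
    · obtain ⟨q, hq1, hq2⟩ := exists_quantile P Y' hY'm c hc hex
      obtain ⟨D, hDm, hDb, hD1, hDval⟩ := construct_D P Y' hY'm hY'int c hc q hq1 hq2
      have hcongr1 : ∫ ω, Y ω * D ω ∂P = ∫ ω, Y' ω * D ω ∂P :=
        integral_congr_ae (hYY'.mono fun ω h => by simp only [h])
      have hcongr2 : ∫ ω, max (Y ω - q) 0 ∂P = ∫ ω, max (Y' ω - q) 0 ∂P :=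
        integral_congr_ae (hYY'.mono fun ω h => by simp only [h])
      have hxS : (∫ ω, Y ω * D ω ∂P) ∈ S :=
        ⟨D, hDm, Filter.Eventually.of_forall hDb, hD1, rfl⟩
      calc (⨅ q : ℝ, g q) ≤ g q := ciInf_le hgBdd q
        _ = ∫ ω, Y ω * D ω ∂P := by rw [hg]; simp only []; rw [hcongr2, hcongr1, hDval]
        _ ≤ sSup S := le_csSup hSbdd hxS
    · -- c = 1 case
      push_neg at hex
      have hc1' : c = 1 := by
        refine le_antisymm hc1 ?_
        have hmono : Monotone fun n : ℕ => {ω | -(n:ℝ) < Y' ω} := by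
          intro n m hnm ω (hω : -(n:ℝ) < Y' ω)
          have := (Nat.cast_le (α := ℝ)).mpr hnm
          show -(m:ℝ) < Y' ω
          linarith
        have hU : (⋃ n : ℕ, {ω | -(n:ℝ) < Y' ω}) = Set.univ := by
          ext ω
          simp only [Set.mem_iUnion, Set.mem_setOf_eq, Set.mem_univ, iff_true]
          obtain ⟨n, hn⟩ := exists_nat_gt (-(Y' ω))
          exact ⟨n, by linarith⟩
        have h1 : Filter.Tendsto (fun n : ℕ => (P {ω | -(n:ℝ) < Y' ω}).toReal) Filter.atTop
            (𝓝 (P (Set.univ : Set Ω)).toReal) := by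
          refine toReal_tendsto P ?_
          have := tendsto_measure_iUnion_atTop (μ := P) hmono
          rwa [hU] at this
        rw [measure_univ] at h1
        simp only [ENNReal.toReal_one] at h1
        exact le_of_tendsto h1 (Filter.Eventually.of_forall fun n => hex _)
      have hglim : ∀ n : ℕ, g (-(n:ℝ)) = ∫ ω, max (Y ω) (-(n:ℝ)) ∂P := by
        intro n
        have hint : Integrable (fun ω => max (Y ω - -(n:ℝ)) 0) P :=
          (hY.sub (integrable_const _)).pos_part
        have heq : ∫ ω, max (Y ω) (-(n:ℝ)) ∂P
            = ∫ ω, (-(n:ℝ) + max (Y ω - -(n:ℝ)) 0) ∂P := by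
          refine integral_congr_ae (Filter.Eventually.of_forall fun ω => ?_)
          dsimp only
          rcases le_total (-(n:ℝ)) (Y ω) with h | h
          · rw [max_eq_left h, max_eq_left (by linarith)]; ring
          · rw [max_eq_right h, max_eq_right (by linarith)]; ring
        rw [hg]
        simp only [hc1', div_one, one_mul]
        rw [heq, integral_add (integrable_const _) hint, integral_const]
        simp
      have htend : Filter.Tendsto (fun n : ℕ => ∫ ω, max (Y ω) (-(n:ℝ)) ∂P) Filter.atTop
          (𝓝 (∫ ω, Y ω ∂P)) := by
        refine tendsto_integral_of_dominated_convergence (fun ω => |Y ω|)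
          (fun n => ?_) hY.abs ?_ ?_
        · exact (hY.aestronglyMeasurable.aemeasurable.max aemeasurable_const).aestronglyMeasurable
        · intro n
          refine Filter.Eventually.of_forall fun ω => ?_
          rw [Real.norm_eq_abs, abs_le]
          constructor
          · exact le_trans (neg_abs_le _) (le_max_left _ _)
          · exact max_le (le_abs_self _) (le_trans (neg_nonpos.mpr (Nat.cast_nonneg n)) (abs_nonneg _))
        · refine Filter.Eventually.of_forall fun ω => ?_
          obtain ⟨N, hN⟩ := exists_nat_ge (-(Y ω))
          refine Filter.Tendsto.congr' ?_ tendsto_const_nhds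
          filter_upwards [Filter.eventually_ge_atTop N] with n hn
          have : -(n:ℝ) ≤ Y ω := by
            have := (Nat.cast_le (α := ℝ)).mpr hn
            linarith
          exact (max_eq_left this).symm
      have hinf : (⨅ q : ℝ, g q) ≤ ∫ ω, Y ω ∂P := by
        refine ge_of_tendsto htend (Filter.Eventually.of_forall fun n => ?_)
        rw [← hglim n]
        exact ciInf_le hgBdd _
      exact le_trans hinf (le_csSup hSbdd hSmem)
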